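/- Let f ∈ H¹ of the half line with weight: suppose f : [0,∞) → ℝ is absolutely continuous, f(y) → 0 as y → ∞, and ∫_0^∞ (f')² ρ_j < ∞ where ρ_j/ρ_n is non-increasing for j ≥ n. Then sup_{y} (ρ_j(y)/ρ_n(y))^{1/2} |f(y) - f(0)| ≤ C_{m-n} (∫_0^∞ (f')² ρ_j)^{1/2} for n < m - 1/2, where C_{m-n} = (2(m-n)-1)^{-1/2}. -/

import Mathlib

open MeasureTheory

/-- The weight functions `ρ_j(y) = (1+y)^{2m} ∏_{k=1}^j (1 + y/k^α)^{-2}`. -/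
noncomputable def rho (m α : ℝ) (j : ℕ) (y : ℝ) : ℝ :=
  (1 + y) ^ (2 * m) * ∏ k ∈ Finset.Icc 1 j, ((1 + y / (k : ℝ) ^ α) ^ 2)⁻¹

lemma rho_eq (m α : ℝ) (j : ℕ) (y : ℝ) :
    rho m α j y = (1 + y) ^ (2 * m) * ∏ k ∈ Finset.Ioc 0 j, ((1 + y / (k : ℝ) ^ α) ^ 2)⁻¹ := by
  rw [rho, ← Finset.Icc_add_one_left_eq_Ioc, zero_add]

lemma factor_pos {α : ℝ} (hα : 0 ≤ α) {y : ℝ} (hy : 0 ≤ y) {k : ℕ} (hk : 0 < k) :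
    0 < 1 + y / (k : ℝ) ^ α := by
  have h1 : (0:ℝ) < (k:ℝ) ^ α := Real.rpow_pos_of_pos (by exact_mod_cast hk) α
  positivity

lemma rho_pos (m : ℝ) {α : ℝ} (hα : 0 ≤ α) (j : ℕ) {y : ℝ} (hy : 0 ≤ y) :
    0 < rho m α j y := by
  rw [rho_eq]
  refine mul_pos (Real.rpow_pos_of_pos (by linarith) _) (Finset.prod_pos fun k hk => ?_)
  have hk1 : 0 < k := (Finset.mem_Ioc.1 hk).1
  have := factor_pos hα hy hk1
  positivity

lemma rho_split (m α : ℝ) {n j : ℕ} (hnj : n ≤ j) (y : ℝ) :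
    rho m α j y = rho m α n y * ∏ k ∈ Finset.Ioc n j, ((1 + y / (k : ℝ) ^ α) ^ 2)⁻¹ := by
  rw [rho_eq, rho_eq, mul_assoc, Finset.prod_Ioc_consecutive _ (Nat.zero_le n) hnj]

lemma ratio_mul_inv_le (m : ℝ) {α : ℝ} (hα : 0 ≤ α) {n j : ℕ} (hnj : n ≤ j)
    {z y : ℝ} (hz : 0 ≤ z) (hzy : z ≤ y) :
    rho m α j y / rho m α n y * (rho m α j z)⁻¹
      ≤ (1 + z) ^ (2 * (n:ℝ) - 2 * m) := by
  have hy : (0:ℝ) ≤ y := hz.trans hzy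
  have hny : 0 < rho m α n y := rho_pos m hα n hy
  have hnz : 0 < rho m α n z := rho_pos m hα n hz
  have hjz : 0 < rho m α j z := rho_pos m hα j hz
  -- each tail factor pos and antitone
  have hfac : ∀ k ∈ Finset.Ioc n j,
      (0:ℝ) < ((1 + z / (k : ℝ) ^ α) ^ 2)⁻¹ ∧
      ((1 + y / (k : ℝ) ^ α) ^ 2)⁻¹ ≤ ((1 + z / (k : ℝ) ^ α) ^ 2)⁻¹ := by
    intro k hk
    have hk1 : 0 < k := Nat.lt_of_le_of_lt (Nat.zero_le n) (Finset.mem_Ioc.1 hk).1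
    have hpz := factor_pos hα hz hk1
    have hpy := factor_pos hα hy hk1
    have hle : 1 + z / (k : ℝ) ^ α ≤ 1 + y / (k : ℝ) ^ α := by
      have h1 : (0:ℝ) < (k:ℝ) ^ α := Real.rpow_pos_of_pos (by exact_mod_cast hk1) α
      have h2 := div_le_div_of_nonneg_right hzy h1.le
      linarith
    constructor
    · positivity
    · exact inv_anti₀ (by positivity) (pow_le_pow_left₀ hpz.le hle 2)
  have hRy : rho m α j y / rho m α n y
      = ∏ k ∈ Finset.Ioc n j, ((1 + y / (k : ℝ) ^ α) ^ 2)⁻¹ := by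
    rw [rho_split m α hnj y, mul_comm, mul_div_assoc, div_self hny.ne', mul_one]
  have hRle : rho m α j y / rho m α n y
      ≤ ∏ k ∈ Finset.Ioc n j, ((1 + z / (k : ℝ) ^ α) ^ 2)⁻¹ := by
    rw [hRy]
    exact Finset.prod_le_prod (fun k hk => by
        have hk1 : 0 < k := Nat.lt_of_le_of_lt (Nat.zero_le n) (Finset.mem_Ioc.1 hk).1
        have := factor_pos hα hy hk1; positivity)
      (fun k hk => (hfac k hk).2)
  have hP : (0:ℝ) < 1 + z := by linarith
  have hProdz : (0:ℝ) < ∏ k ∈ Finset.Ioc n j, ((1 + z / (k : ℝ) ^ α) ^ 2)⁻¹ := by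
    refine Finset.prod_pos fun k hk => ?_
    have hk1 : 0 < k := Nat.lt_of_le_of_lt (Nat.zero_le n) (Finset.mem_Ioc.1 hk).1
    have := factor_pos hα hz hk1; positivity
  calc rho m α j y / rho m α n y * (rho m α j z)⁻¹
      ≤ (∏ k ∈ Finset.Ioc n j, ((1 + z / (k : ℝ) ^ α) ^ 2)⁻¹) * (rho m α j z)⁻¹ :=
        mul_le_mul_of_nonneg_right hRle (inv_nonneg.2 hjz.le)
    _ = (rho m α n z)⁻¹ := by
        rw [rho_split m α hnj z, mul_inv]
        field_simp
    _ = ((1 + z) ^ (2 * m))⁻¹ * ∏ k ∈ Finset.Ioc 0 n, (1 + z / (k : ℝ) ^ α) ^ 2 := by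
        rw [rho_eq, mul_inv, Finset.prod_inv_distrib, inv_inv]
    _ ≤ ((1 + z) ^ (2 * m))⁻¹ * (1 + z) ^ (2 * n) := by
        refine mul_le_mul_of_nonneg_left ?_ (inv_nonneg.2 (Real.rpow_pos_of_pos hP _).le)
        calc ∏ k ∈ Finset.Ioc 0 n, (1 + z / (k : ℝ) ^ α) ^ 2
            ≤ ∏ _k ∈ Finset.Ioc 0 n, (1 + z) ^ 2 := by
              refine Finset.prod_le_prod (fun k _ => sq_nonneg _) fun k hk => ?_
              have hk1 : 0 < k := (Finset.mem_Ioc.1 hk).1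
              have h1 : (1:ℝ) ≤ (k:ℝ) ^ α :=
                Real.one_le_rpow (by exact_mod_cast hk1) hα
              have hpz := factor_pos hα hz hk1
              exact pow_le_pow_left₀ hpz.le (by linarith [div_le_self hz h1]) 2
          _ = ((1 + z) ^ 2) ^ n := by rw [Finset.prod_const, Nat.card_Ioc, Nat.sub_zero]
          _ = (1 + z) ^ (2 * n) := by rw [← pow_mul]
    _ = (1 + z) ^ (2 * (n:ℝ) - 2 * m) := by
        have hcast : (2 * (n:ℝ)) = ((2 * n : ℕ) : ℝ) := by push_cast; ring
        rw [Real.rpow_sub hP, hcast, Real.rpow_natCast, div_eq_mul_inv, mul_comm]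

lemma rho_continuousOn (m : ℝ) {α : ℝ} (hα : 0 ≤ α) (j : ℕ) :
    ContinuousOn (rho m α j) (Set.Ici 0) := by
  unfold rho
  apply ContinuousOn.mul
  · intro z hz
    have hz0 : (0:ℝ) ≤ z := hz
    have hP : (0:ℝ) < 1 + z := by linarith
    exact ((Real.continuousAt_rpow_const (1 + z) (2 * m) (Or.inl hP.ne')).comp
      ((continuous_const.add continuous_id).continuousAt)).continuousWithinAt
  · refine continuousOn_finset_prod _ fun k hk => ?_
    have hk1 : 0 < k := by
      have := (Finset.mem_Icc.1 hk).1; omega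
    refine ContinuousOn.inv₀ (Continuous.continuousOn (by continuity)) fun z hz => ?_
    have := factor_pos hα (hz : (0:ℝ) ≤ z) hk1
    positivity

lemma integral_pow_bound (m : ℝ) (n : ℕ) (hn : (n : ℝ) < m - 1/2) {y : ℝ} (hy : 0 ≤ y) :
    ∫ z in Set.Ioc (0:ℝ) y, (1 + z) ^ (2 * (n:ℝ) - 2 * m)
      ≤ 1 / (2 * (m - (n:ℝ)) - 1) := by
  set c : ℝ := 2 * (n:ℝ) - 2 * m with hc
  have hc1 : c + 1 < 0 := by rw [hc]; linarith
  have h0 : ∫ z in Set.Ioc (0:ℝ) y, (1 + z) ^ c = ∫ z in (0:ℝ)..y, (1 + z) ^ c :=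
    (intervalIntegral.integral_of_le hy).symm
  have h1 : ∫ z in (0:ℝ)..y, (1 + z) ^ c = ∫ x in (1:ℝ)..(1 + y), x ^ c := by
    simpa using intervalIntegral.integral_comp_add_left (a := (0:ℝ)) (b := y)
      (fun x => x ^ c) 1
  have h2 : (0:ℝ) ∉ Set.uIcc (1:ℝ) (1 + y) := by
    rw [Set.uIcc_of_le (by linarith : (1:ℝ) ≤ 1 + y)]
    rintro ⟨h1', -⟩; linarith
  rw [h0, h1, integral_rpow (Or.inr ⟨by linarith, h2⟩)]
  have ht : (0:ℝ) < (1 + y) ^ (c + 1) := Real.rpow_pos_of_pos (by linarith) _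
  have hone : (1:ℝ) ^ (c + 1) = 1 := Real.one_rpow _
  rw [hone]
  have hKeq : 2 * (m - (n:ℝ)) - 1 = -(c + 1) := by rw [hc]; ring
  rw [hKeq]
  have hd : (0:ℝ) < -(c + 1) := by linarith
  rw [show ((1 + y) ^ (c + 1) - 1) / (c + 1) = (1 - (1 + y) ^ (c + 1)) / (-(c + 1)) by
    rw [← neg_div_neg_eq, neg_sub]]
  rw [div_le_div_iff₀ hd hd]
  nlinarith

theorem stmt15 (m α : ℝ) (hα : 0 ≤ α) (n j : ℕ) (hnj : n ≤ j)
    (hn : (n : ℝ) < m - 1/2)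
    (f : ℝ → ℝ) (hf : ContDiff ℝ 1 f)
    (hlim : Filter.Tendsto f Filter.atTop (nhds 0))
    (hint : Integrable (fun z => (deriv f z) ^ 2 * rho m α j z)
      (volume.restrict (Set.Ioi 0))) :
    ∀ y : ℝ, 0 ≤ y →
      Real.sqrt (rho m α j y / rho m α n y) * |f y - f 0|
        ≤ Real.sqrt (1 / (2 * (m - (n : ℝ)) - 1)) *
          Real.sqrt (∫ z in Set.Ioi (0:ℝ), (deriv f z) ^ 2 * rho m α j z) := by
  intro y hy
  have hderiv_cont : Continuous (deriv f) := hf.continuous_deriv le_rfl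
  set u : ℝ → ℝ := fun z => |deriv f z| * Real.sqrt (rho m α j z) with hu_def
  set v : ℝ → ℝ := fun z => (Real.sqrt (rho m α j z))⁻¹ with hv_def
  have hrhoC : ContinuousOn (rho m α j) (Set.Icc 0 y) :=
    (rho_continuousOn m hα j).mono (Set.Icc_subset_Ici_self)
  have hrpos : ∀ z ∈ Set.Icc (0:ℝ) y, 0 < rho m α j z := fun z hz => rho_pos m hα j hz.1
  have hu_cont : ContinuousOn u (Set.Icc 0 y) :=
    (hderiv_cont.abs.continuousOn).mul (Real.continuous_sqrt.comp_continuousOn hrhoC)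
  have hv_cont : ContinuousOn v (Set.Icc 0 y) :=
    ContinuousOn.inv₀ (Real.continuous_sqrt.comp_continuousOn hrhoC)
      fun z hz => (Real.sqrt_pos.2 (hrpos z hz)).ne'
  have hIocIcc : Set.Ioc (0:ℝ) y ⊆ Set.Icc 0 y := Set.Ioc_subset_Icc_self
  -- integrability of f'^2 rho on Ioc
  have hIoc : IntegrableOn (fun z => (deriv f z) ^ 2 * rho m α j z) (Set.Ioc 0 y) volume :=
    MeasureTheory.IntegrableOn.mono_set hint Set.Ioc_subset_Ioi_self
  -- integrability of rho⁻¹ on Ioc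
  have hvint : IntegrableOn (fun z => (rho m α j z)⁻¹) (Set.Ioc 0 y) volume :=
    ((hrhoC.inv₀ fun z hz => (hrpos z hz).ne').integrableOn_Icc).mono_set hIocIcc
  -- u² = f'² ρ on Ioc, v² = ρ⁻¹ on Ioc
  have hu2eq : ∀ z ∈ Set.Ioc (0:ℝ) y, (deriv f z) ^ 2 * rho m α j z = u z ^ 2 := by
    intro z hz
    have h := (rho_pos m hα j hz.1.le).le
    rw [hu_def]; simp only [mul_pow, sq_abs, Real.sq_sqrt h]
  have hv2eq : ∀ z ∈ Set.Ioc (0:ℝ) y, (rho m α j z)⁻¹ = v z ^ 2 := by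
    intro z hz
    have h := (rho_pos m hα j hz.1.le).le
    rw [hv_def]; simp only [inv_pow, Real.sq_sqrt h]
  have hu2int : Integrable (fun z => u z ^ 2) (volume.restrict (Set.Ioc 0 y)) :=
    hIoc.congr ((ae_restrict_mem measurableSet_Ioc).mono hu2eq)
  have hv2int : Integrable (fun z => v z ^ 2) (volume.restrict (Set.Ioc 0 y)) :=
    hvint.congr ((ae_restrict_mem measurableSet_Ioc).mono hv2eq)
  have hu_mem : MemLp u (ENNReal.ofReal 2) (volume.restrict (Set.Ioc 0 y)) := by
    rw [show ENNReal.ofReal (2:ℝ) = 2 by norm_num]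
    exact (memLp_two_iff_integrable_sq
      (((hu_cont.mono hIocIcc)).aestronglyMeasurable measurableSet_Ioc)).2 hu2int
  have hv_mem : MemLp v (ENNReal.ofReal 2) (volume.restrict (Set.Ioc 0 y)) := by
    rw [show ENNReal.ofReal (2:ℝ) = 2 by norm_num]
    exact (memLp_two_iff_integrable_sq
      (((hv_cont.mono hIocIcc)).aestronglyMeasurable measurableSet_Ioc)).2 hv2int
  have hpq : Real.HolderConjugate 2 2 := Real.holderConjugate_iff.mpr ⟨one_lt_two, by norm_num⟩
  have hCS := integral_mul_le_Lp_mul_Lq_of_nonneg hpq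
    (ae_of_all _ fun z => mul_nonneg (abs_nonneg _) (Real.sqrt_nonneg _))
    (ae_of_all _ fun z => inv_nonneg.2 (Real.sqrt_nonneg _)) hu_mem hv_mem
  simp only [Real.rpow_two] at hCS
  set A : ℝ := ∫ z in Set.Ioc (0:ℝ) y, (deriv f z) ^ 2 * rho m α j z with hA_def
  set B : ℝ := ∫ z in Set.Ioc (0:ℝ) y, (rho m α j z)⁻¹ with hB_def
  set S : ℝ := ∫ z in Set.Ioi (0:ℝ), (deriv f z) ^ 2 * rho m α j z with hS_def
  set R : ℝ := rho m α j y / rho m α n y with hR_def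
  have hAeq' : (∫ z in Set.Ioc (0:ℝ) y, u z ^ 2) = A := by
    rw [hA_def]; exact (setIntegral_congr_fun measurableSet_Ioc hu2eq).symm
  have hBeq : (∫ z in Set.Ioc (0:ℝ) y, v z ^ 2) = B := by
    rw [hB_def]; exact (setIntegral_congr_fun measurableSet_Ioc hv2eq).symm
  rw [hAeq', hBeq] at hCS
  -- FTC and abs bound
  have hftc : f y - f 0 = ∫ z in (0:ℝ)..y, deriv f z :=
    (intervalIntegral.integral_deriv_eq_sub
      (fun x _ => (hf.differentiable one_ne_zero).differentiableAt)
      (hderiv_cont.intervalIntegrable 0 y)).symm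
  have habs : |f y - f 0| ≤ ∫ z in Set.Ioc (0:ℝ) y, |deriv f z| := by
    rw [hftc]
    calc |∫ z in (0:ℝ)..y, deriv f z| ≤ ∫ z in (0:ℝ)..y, |deriv f z| :=
          intervalIntegral.abs_integral_le_integral_abs hy
      _ = ∫ z in Set.Ioc (0:ℝ) y, |deriv f z| := intervalIntegral.integral_of_le hy
  have huv : ∫ z in Set.Ioc (0:ℝ) y, |deriv f z| = ∫ z in Set.Ioc (0:ℝ) y, u z * v z := by
    refine setIntegral_congr_fun measurableSet_Ioc fun z hz => ?_
    have h := rho_pos m hα j hz.1.le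
    have hs : Real.sqrt (rho m α j z) ≠ 0 := (Real.sqrt_pos.2 h).ne'
    rw [hu_def, hv_def]
    field_simp
  -- nonnegativity facts
  have hA0 : 0 ≤ A := setIntegral_nonneg measurableSet_Ioc fun z hz =>
    mul_nonneg (sq_nonneg _) (rho_pos m hα j hz.1.le).le
  have hR0 : 0 ≤ R := div_nonneg (rho_pos m hα j hy).le (rho_pos m hα n hy).le
  have hAS : A ≤ S := by
    rw [hA_def, hS_def]
    refine setIntegral_mono_set hint ?_ (HasSubset.Subset.eventuallyLE Set.Ioc_subset_Ioi_self)
    exact (ae_restrict_mem measurableSet_Ioi).mono fun z hz =>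
      mul_nonneg (sq_nonneg _) (rho_pos m hα j (le_of_lt hz)).le
  -- R * B ≤ K
  have hRB : R * B ≤ 1 / (2 * (m - (n:ℝ)) - 1) := by
    have hmul : R * B = ∫ z in Set.Ioc (0:ℝ) y, R * (rho m α j z)⁻¹ := by
      rw [hB_def, integral_const_mul]
    have hmono : ∫ z in Set.Ioc (0:ℝ) y, R * (rho m α j z)⁻¹
        ≤ ∫ z in Set.Ioc (0:ℝ) y, (1 + z) ^ (2 * (n:ℝ) - 2 * m) := by
      refine setIntegral_mono_on (hvint.const_mul R) ?_ measurableSet_Ioc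
        fun z hz => ratio_mul_inv_le m hα hnj hz.1.le hz.2
      refine (ContinuousOn.integrableOn_Icc ?_).mono_set hIocIcc
      intro z hz
      have hP : (0:ℝ) < 1 + z := by have : (0:ℝ) ≤ z := hz.1; linarith
      exact ((Real.continuousAt_rpow_const (1 + z) _ (Or.inl hP.ne')).comp
        ((continuous_const.add continuous_id).continuousAt)).continuousWithinAt
    rw [hmul]
    exact hmono.trans (integral_pow_bound m n hn hy)
  -- assemble
  calc Real.sqrt R * |f y - f 0|
      ≤ Real.sqrt R * (Real.sqrt A * Real.sqrt B) := by
        refine mul_le_mul_of_nonneg_left ?_ (Real.sqrt_nonneg _)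
        calc |f y - f 0| ≤ ∫ z in Set.Ioc (0:ℝ) y, |deriv f z| := habs
          _ = ∫ z in Set.Ioc (0:ℝ) y, u z * v z := huv
          _ ≤ A ^ (1/2 : ℝ) * B ^ (1/2 : ℝ) := hCS
          _ = Real.sqrt A * Real.sqrt B := by rw [Real.sqrt_eq_rpow, Real.sqrt_eq_rpow]
    _ = Real.sqrt A * Real.sqrt (R * B) := by
        rw [Real.sqrt_mul hR0]; ring
    _ ≤ Real.sqrt (1 / (2 * (m - (n:ℝ)) - 1)) * Real.sqrt S := by
        rw [mul_comm]
        exact mul_le_mul (Real.sqrt_le_sqrt hRB) (Real.sqrt_le_sqrt hAS)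
          (Real.sqrt_nonneg _) (Real.sqrt_nonneg _)
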